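/- Define the k-linear map tr: Z(Γ) → k on the basis by tr(e_i) = 0, tr(a^{i,j}) = 0, tr(c·e_i) = 1 for all i,j ∈ Γ_0. Then: (i) tr(xy) = tr(yx) for all x,y ∈ Z(Γ); (ii) the bilinear form ⟨x,y⟩ := tr(xy) on Z(Γ) is nondegenerate, symmetric and associative; (iii) the map φ: Z(Γ) → Z(Γ)* given by φ(a) = ⟨a,−⟩ is a (Z(Γ),Z(Γ))-bimodule isomorphism homogeneous of degree −2, with φ(e_i) = (c·e_i)*, φ(a^{i,j}) = (a^{j,i})*, and φ(c·e_i) = e_i*. In particular Z(Γ) is a graded symmetric algebra with d = 2. -/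

import Mathlib

/-!
Statement 12 (Lemma `zigfacts`(v)–(vii)): the trace form of the zigzag algebra.
For the `k`-linear map `tr : Z(Γ) → k` defined on the standard basis by
`tr(e_i) = 0`, `tr(a^{i,j}) = 0`, `tr(c e_i) = 1`:
(i) `tr(xy) = tr(yx)`;
(ii) the bilinear form `⟨x,y⟩ = tr(xy)` is nondegenerate, symmetric and associative;
(iii) `φ : x ↦ ⟨x,-⟩` is a bimodule isomorphism `Z(Γ) → Z(Γ)*` homogeneous of
degree `-2`, with `φ(e_i) = (c e_i)*`, `φ(a^{i,j}) = (a^{j,i})*`, `φ(c e_i) = e_i*`.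
In particular `Z(Γ)` is a graded symmetric algebra with `d = 2`.
-/

noncomputable section

variable (k : Type*) [CommRing k]
variable (V : Type*) [Fintype V] [DecidableEq V] (G : SimpleGraph V) [DecidableRel G.Adj]

/-- Generators of the zigzag algebra `Z(Γ)` of a graph `Γ`: the idempotents `e_i`
(`i` a vertex), the arrows `a^{i,j} : j → i` (`{i,j}` an edge, one arrow for each
orientation), and the length-two cycles `c_i` based at `i`. -/
inductive ZigGen : Type _
  | e : V → ZigGen
  | a : (p : V × V) → G.Adj p.1 p.2 → ZigGen
  | c : V → ZigGen

open FreeAlgebra in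
/-- The defining relations of the zigzag algebra: the `e_i` are orthogonal
idempotents summing to `1`; `a^{i,j}` is a path from `j` to `i`; all paths of
length `≥ 3` vanish; length-two paths which are not cycles vanish; all length-two
cycles at a vertex `i` are equal (to `c_i`). -/
inductive ZigRel : FreeAlgebra k (ZigGen V G) → FreeAlgebra k (ZigGen V G) → Prop
  | ee (i j : V) :
      ZigRel (ι k (.e i) * ι k (.e j)) (if i = j then ι k (.e i) else 0)
  | esum : ZigRel (∑ i : V, ι k (.e i)) 1
  | ea (i : V) (p : V × V) (h : G.Adj p.1 p.2) :
      ZigRel (ι k (.e i) * ι k (.a p h)) (if i = p.1 then ι k (.a p h) else 0)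
  | ae (p : V × V) (h : G.Adj p.1 p.2) (j : V) :
      ZigRel (ι k (.a p h) * ι k (.e j)) (if j = p.2 then ι k (.a p h) else 0)
  | aa (p : V × V) (h : G.Adj p.1 p.2) (q : V × V) (h' : G.Adj q.1 q.2) :
      ZigRel (ι k (.a p h) * ι k (.a q h'))
        (if p.2 = q.1 ∧ p.1 = q.2 then ι k (.c p.1) else 0)
  | ec (i j : V) :
      ZigRel (ι k (.e i) * ι k (.c j)) (if i = j then ι k (.c j) else 0)
  | ce (j i : V) :
      ZigRel (ι k (.c j) * ι k (.e i)) (if i = j then ι k (.c j) else 0)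
  | ca (j : V) (p : V × V) (h : G.Adj p.1 p.2) :
      ZigRel (ι k (.c j) * ι k (.a p h)) 0
  | ac (p : V × V) (h : G.Adj p.1 p.2) (j : V) :
      ZigRel (ι k (.a p h) * ι k (.c j)) 0
  | cc (i j : V) : ZigRel (ι k (.c i) * ι k (.c j)) 0

/-- The zigzag algebra `Z(Γ)` of the graph `Γ`, presented by generators and
relations. -/
abbrev ZigAlg := RingQuot (ZigRel k V G)

/-- The idempotent `e_i ∈ Z(Γ)`. -/
noncomputable def eZ (i : V) : ZigAlg k V G :=
  RingQuot.mkAlgHom k (ZigRel k V G) (FreeAlgebra.ι k (.e i))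

/-- The arrow `a^{i,j} ∈ Z(Γ)` (a path from `j` to `i`), for an edge `{i,j}`. -/
noncomputable def aZ (p : V × V) (h : G.Adj p.1 p.2) : ZigAlg k V G :=
  RingQuot.mkAlgHom k (ZigRel k V G) (FreeAlgebra.ι k (.a p h))

/-- The length-two cycle `c e_i = c_i ∈ Z(Γ)`. -/
noncomputable def cZ (i : V) : ZigAlg k V G :=
  RingQuot.mkAlgHom k (ZigRel k V G) (FreeAlgebra.ι k (.c i))

/-- Path-length degree of the generators of the zigzag algebra. -/
def zigDeg : ZigGen V G → ℕ
  | .e _ => 0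
  | .a _ _ => 1
  | .c _ => 2

/-- The degree-`m` homogeneous component of the zigzag algebra for the path-length
grading: the span of the images of products of generators of total degree `m`. -/
noncomputable def ZigComp (m : ℕ) : Submodule k (ZigAlg k V G) :=
  Submodule.span k {x | ∃ L : List (ZigGen V G),
    (L.map (zigDeg V G)).sum = m ∧
    x = (L.map (fun g => RingQuot.mkAlgHom k (ZigRel k V G) (FreeAlgebra.ι k g))).prod}

/-- The family `{e_i} ∪ {a^{i,j}} ∪ {c e_i}`, which is the standard basis of the
zigzag algebra. -/
noncomputable def zigFam :
    (V ⊕ {p : V × V // G.Adj p.1 p.2} ⊕ V) → ZigAlg k V G :=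
  Sum.elim (fun i => eZ k V G i)
    (Sum.elim (fun p => aZ k V G p.1 p.2) (fun i => cZ k V G i))

end

/-- The map `Φ : Z(Γ) → Z(Γ)*`, `Φ(x)(y) = tr(x y)`, associated with a trace `tr`. -/
noncomputable def zigPhi (k : Type*) [CommRing k]
    (V : Type*) [Fintype V] [DecidableEq V]
    (G : SimpleGraph V) [DecidableRel G.Adj]
    (tr : ZigAlg k V G →ₗ[k] k) :
    ZigAlg k V G →ₗ[k] Module.Dual k (ZigAlg k V G) where
  toFun x := tr ∘ₗ LinearMap.mulLeft k x
  map_add' x x' := by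
    ext y; simp [LinearMap.mulLeft_apply, add_mul]
  map_smul' c x := by
    ext y; simp [LinearMap.mulLeft_apply, smul_mul_assoc]

set_option linter.unusedSectionVars false

section ZigAux
variable {k : Type*} [CommRing k]
variable {V : Type*} [Fintype V] [DecidableEq V] {G : SimpleGraph V} [DecidableRel G.Adj]

lemma zig_mulEE (i j : V) :
    eZ k V G i * eZ k V G j = if i = j then eZ k V G i else 0 := by
  unfold eZ
  rw [← map_mul, RingQuot.mkAlgHom_rel k (ZigRel.ee i j)]
  by_cases h : i = j <;> simp [h]

lemma zig_mulEA (i : V) (p : V × V) (h : G.Adj p.1 p.2) :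
    eZ k V G i * aZ k V G p h = if i = p.1 then aZ k V G p h else 0 := by
  unfold eZ aZ
  rw [← map_mul, RingQuot.mkAlgHom_rel k (ZigRel.ea i p h)]
  by_cases hc : i = p.1 <;> simp [hc]

lemma zig_mulAE (p : V × V) (h : G.Adj p.1 p.2) (j : V) :
    aZ k V G p h * eZ k V G j = if j = p.2 then aZ k V G p h else 0 := by
  unfold eZ aZ
  rw [← map_mul, RingQuot.mkAlgHom_rel k (ZigRel.ae p h j)]
  by_cases hc : j = p.2 <;> simp [hc]

lemma zig_mulAA (p : V × V) (h : G.Adj p.1 p.2) (q : V × V) (h' : G.Adj q.1 q.2) :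
    aZ k V G p h * aZ k V G q h' =
      if p.2 = q.1 ∧ p.1 = q.2 then cZ k V G p.1 else 0 := by
  unfold aZ cZ
  rw [← map_mul, RingQuot.mkAlgHom_rel k (ZigRel.aa p h q h')]
  by_cases hc : p.2 = q.1 ∧ p.1 = q.2 <;> simp [hc]

lemma zig_mulEC (i j : V) :
    eZ k V G i * cZ k V G j = if i = j then cZ k V G j else 0 := by
  unfold eZ cZ
  rw [← map_mul, RingQuot.mkAlgHom_rel k (ZigRel.ec i j)]
  by_cases hc : i = j <;> simp [hc]

lemma zig_mulCE (j i : V) :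
    cZ k V G j * eZ k V G i = if i = j then cZ k V G j else 0 := by
  unfold eZ cZ
  rw [← map_mul, RingQuot.mkAlgHom_rel k (ZigRel.ce j i)]
  by_cases hc : i = j <;> simp [hc]

lemma zig_mulCA (j : V) (p : V × V) (h : G.Adj p.1 p.2) :
    cZ k V G j * aZ k V G p h = 0 := by
  unfold aZ cZ
  rw [← map_mul, RingQuot.mkAlgHom_rel k (ZigRel.ca j p h), map_zero]

lemma zig_mulAC (p : V × V) (h : G.Adj p.1 p.2) (j : V) :
    aZ k V G p h * cZ k V G j = 0 := by
  unfold aZ cZ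
  rw [← map_mul, RingQuot.mkAlgHom_rel k (ZigRel.ac p h j), map_zero]

lemma zig_mulCC (i j : V) : cZ k V G i * cZ k V G j = 0 := by
  unfold cZ
  rw [← map_mul, RingQuot.mkAlgHom_rel k (ZigRel.cc i j), map_zero]

lemma zig_oneEq : ∑ i : V, eZ k V G i = (1 : ZigAlg k V G) := by
  unfold eZ
  rw [← map_sum, RingQuot.mkAlgHom_rel k (ZigRel.esum (G := G)), map_one]

end ZigAux

section ZigAux2
set_option linter.unusedSectionVars false
variable {k : Type*} [CommRing k]
variable {V : Type*} [Fintype V] [DecidableEq V] {G : SimpleGraph V} [DecidableRel G.Adj]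

/-- The involution on the basis index pairing each basis vector with its dual partner. -/
def zigSigma : (V ⊕ {p : V × V // G.Adj p.1 p.2} ⊕ V) → (V ⊕ {p : V × V // G.Adj p.1 p.2} ⊕ V)
  | .inl i => .inr (.inr i)
  | .inr (.inl ⟨p, h⟩) => .inr (.inl ⟨p.swap, by simpa using h.symm⟩)
  | .inr (.inr i) => .inl i

lemma zigSigma_involutive : Function.Involutive (zigSigma (V := V) (G := G)) := by
  rintro (i | ⟨⟨p, h⟩⟩ | i) <;> simp [zigSigma]

lemma zig_mul_gen (g g' : ZigGen V G) :
    (RingQuot.mkAlgHom k (ZigRel k V G) (FreeAlgebra.ι k g)) *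
      (RingQuot.mkAlgHom k (ZigRel k V G) (FreeAlgebra.ι k g')) = 0 ∨
    ∃ g'', zigDeg V G g'' = zigDeg V G g + zigDeg V G g' ∧
      (RingQuot.mkAlgHom k (ZigRel k V G) (FreeAlgebra.ι k g)) *
        (RingQuot.mkAlgHom k (ZigRel k V G) (FreeAlgebra.ι k g'))
          = RingQuot.mkAlgHom k (ZigRel k V G) (FreeAlgebra.ι k g'') := by
  rcases g with i | ⟨p, h⟩ | i <;> rcases g' with j | ⟨q, h'⟩ | j
  · by_cases hc : i = j
    · exact Or.inr ⟨.e i, by simp [zigDeg], by simpa [eZ, hc] using zig_mulEE (k := k) (G := G) i j⟩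
    · exact Or.inl (by simpa [eZ, hc] using zig_mulEE (k := k) (G := G) i j)
  · by_cases hc : i = q.1
    · exact Or.inr ⟨.a q h', by simp [zigDeg], by simpa [eZ, aZ, hc] using zig_mulEA i q h'⟩
    · exact Or.inl (by simpa [eZ, aZ, hc] using zig_mulEA i q h')
  · by_cases hc : i = j
    · exact Or.inr ⟨.c j, by simp [zigDeg], by simpa [eZ, cZ, hc] using zig_mulEC (k := k) (G := G) i j⟩
    · exact Or.inl (by simpa [eZ, cZ, hc] using zig_mulEC (k := k) (G := G) i j)
  · by_cases hc : j = p.2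
    · exact Or.inr ⟨.a p h, by simp [zigDeg], by simpa [eZ, aZ, hc] using zig_mulAE p h j⟩
    · exact Or.inl (by simpa [eZ, aZ, hc] using zig_mulAE p h j)
  · by_cases hc : p.2 = q.1 ∧ p.1 = q.2
    · exact Or.inr ⟨.c p.1, by simp [zigDeg], by simpa [aZ, cZ, hc] using zig_mulAA p h q h'⟩
    · exact Or.inl (by simpa [aZ, cZ, hc] using zig_mulAA p h q h')
  · exact Or.inl (by simpa [aZ, cZ] using zig_mulAC p h j)
  · by_cases hc : j = i
    · exact Or.inr ⟨.c i, by simp [zigDeg], by simpa [eZ, cZ, hc] using zig_mulCE (k := k) (G := G) i j⟩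
    · exact Or.inl (by simpa [eZ, cZ, hc] using zig_mulCE (k := k) (G := G) i j)
  · exact Or.inl (by simpa [aZ, cZ] using zig_mulCA i q h')
  · exact Or.inl (by simpa [cZ] using zig_mulCC (k := k) (G := G) i j)

lemma zig_prodReduce (L : List (ZigGen V G)) (hL : L ≠ []) :
    (L.map fun g => RingQuot.mkAlgHom k (ZigRel k V G) (FreeAlgebra.ι k g)).prod = 0 ∨
    ∃ g, zigDeg V G g = (L.map (zigDeg V G)).sum ∧
      (L.map fun g => RingQuot.mkAlgHom k (ZigRel k V G) (FreeAlgebra.ι k g)).prod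
        = RingQuot.mkAlgHom k (ZigRel k V G) (FreeAlgebra.ι k g) := by
  induction L with
  | nil => simp at hL
  | cons g L ih =>
    by_cases hL' : L = []
    · subst hL'
      exact Or.inr ⟨g, by simp, by simp⟩
    · rcases ih hL' with h0 | ⟨g', hd, hp⟩
      · exact Or.inl (by simp [h0])
      · rcases zig_mul_gen (k := k) g g' with h0 | ⟨g'', hdeg, hm⟩
        · exact Or.inl (by simp [hp, h0])
        · refine Or.inr ⟨g'', ?_, ?_⟩
          · simp only [List.map_cons, List.sum_cons, ← hd]
            exact hdeg
          · rw [List.map_cons, List.prod_cons, hp, hm]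
end ZigAux2

theorem stmt12
    (k : Type*) [CommRing k] [IsNoetherianRing k]
    (V : Type*) [Fintype V] [DecidableEq V]
    (G : SimpleGraph V) [DecidableRel G.Adj]
    (hconn : G.Connected)
    -- the standard basis of `Z(Γ)`
    (B : Module.Basis (V ⊕ {p : V × V // G.Adj p.1 p.2} ⊕ V) k (ZigAlg k V G))
    (hB : ∀ s, B s = zigFam k V G s)
    -- the trace map, defined on the basis by
    -- `tr(e_i) = 0`, `tr(a^{i,j}) = 0`, `tr(c e_i) = 1`
    (tr : ZigAlg k V G →ₗ[k] k)
    (htre : ∀ i, tr (eZ k V G i) = 0)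
    (htra : ∀ (p : V × V) (h : G.Adj p.1 p.2), tr (aZ k V G p h) = 0)
    (htrc : ∀ i, tr (cZ k V G i) = 1) :
    -- (i) `tr (xy) = tr (yx)`
    (∀ x y : ZigAlg k V G, tr (x * y) = tr (y * x)) ∧
    -- (ii) the form `⟨x,y⟩ := tr (xy)` is nondegenerate, symmetric and associative
    ((∀ x : ZigAlg k V G, (∀ y, tr (x * y) = 0) → x = 0) ∧
      (∀ x y : ZigAlg k V G, tr (x * y) = tr (y * x)) ∧
      (∀ x y z : ZigAlg k V G, tr ((x * y) * z) = tr (x * (y * z)))) ∧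
    -- (iii) `φ = zigPhi tr : Z(Γ) → Z(Γ)*` is a bimodule isomorphism of degree `-2`
    (Function.Bijective (zigPhi k V G tr) ∧
      -- bimodule homomorphism: `φ(a x b)(y) = φ(x)(b y a)`
      (∀ a x b y : ZigAlg k V G,
        zigPhi k V G tr (a * x * b) y = zigPhi k V G tr x (b * y * a)) ∧
      -- homogeneous of degree `-2`
      (∀ (m s : ℕ) (x y : ZigAlg k V G), x ∈ ZigComp k V G m → y ∈ ZigComp k V G s →
        m + s ≠ 2 → zigPhi k V G tr x y = 0) ∧
      -- values on the basis: `φ(e_i) = (c e_i)*`, `φ(a^{i,j}) = (a^{j,i})*`,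
      -- `φ(c e_i) = e_i*`
      (∀ i, zigPhi k V G tr (eZ k V G i) = B.coord (Sum.inr (Sum.inr i))) ∧
      (∀ (p : V × V) (h : G.Adj p.1 p.2),
        zigPhi k V G tr (aZ k V G p h)
          = B.coord (Sum.inr (Sum.inl ⟨(p.2, p.1), h.symm⟩))) ∧
      (∀ i, zigPhi k V G tr (cZ k V G i) = B.coord (Sum.inl i))) := by
-- proof begins
  classical
  have phiApp : ∀ x y : ZigAlg k V G, zigPhi k V G tr x y = tr (x * y) := fun _ _ => rfl
  -- trace table on the basis
  have htable : ∀ s t, tr (B s * B t) = if t = zigSigma s then (1 : k) else 0 := by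
    rintro (i | ⟨⟨p, hp⟩⟩ | i) (j | ⟨⟨q, hq⟩⟩ | j) <;>
      simp only [hB, zigFam, Sum.elim_inl, Sum.elim_inr, zigSigma, zig_mulEE, zig_mulEA,
        zig_mulAE, zig_mulAA, zig_mulEC, zig_mulCE, zig_mulCA, zig_mulAC, zig_mulCC,
        apply_ite tr, map_zero, htre, htra, htrc]
    · simp
    · simp
    · by_cases h : i = j <;> simp [h, eq_comm]
    · simp
    · simp only [Sum.inr.injEq, Sum.inl.injEq, Subtype.mk.injEq, Prod.ext_iff,
        Prod.fst_swap, Prod.snd_swap]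
      exact if_congr ⟨fun ⟨h1, h2⟩ => ⟨h1.symm, h2.symm⟩,
        fun ⟨h1, h2⟩ => ⟨h1.symm, h2.symm⟩⟩ rfl rfl
    · simp
    · by_cases h : i = j <;> simp [h, eq_comm]
    · simp
    · simp
  have hσ : Function.Involutive (zigSigma (V := V) (G := G)) := zigSigma_involutive
  -- symmetry
  have hsymmBB : ∀ s t, tr (B s * B t) = tr (B t * B s) := by
    intro s t
    rw [htable, htable]
    by_cases h : t = zigSigma s
    · rw [if_pos h, if_pos (by rw [h, hσ])]
    · rw [if_neg h, if_neg fun hc => h (by rw [hc, hσ])]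
  have hsymm : ∀ x y : ZigAlg k V G, tr (x * y) = tr (y * x) := by
    have hmaps : (LinearMap.mul k (ZigAlg k V G)).compr₂ tr
        = (LinearMap.mul k (ZigAlg k V G)).flip.compr₂ tr := by
      apply B.ext; intro s; apply B.ext; intro t
      simpa using hsymmBB s t
    intro x y
    simpa using LinearMap.congr_fun (LinearMap.congr_fun hmaps x) y
  -- φ on the basis
  have phiB : ∀ s, zigPhi k V G tr (B s) = B.coord (zigSigma s) := by
    intro s
    apply B.ext
    intro t
    rw [phiApp, htable, Module.Basis.coord_apply, Module.Basis.repr_self, Finsupp.single_apply]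
  -- bijectivity via basis equivalence
  have hphi_eq : (zigPhi k V G tr)
      = (B.equiv B.dualBasis (hσ.toPerm _)).toLinearMap := by
    apply B.ext
    intro s
    rw [phiB s]
    simp [Module.Basis.equiv_apply]
  have hbij : Function.Bijective (zigPhi k V G tr) := by
    rw [hphi_eq]
    exact (B.equiv B.dualBasis (hσ.toPerm _)).bijective
  -- nondegeneracy
  have hnd : ∀ x : ZigAlg k V G, (∀ y, tr (x * y) = 0) → x = 0 := by
    intro x hx
    have h0 : zigPhi k V G tr x = 0 := by
      apply LinearMap.ext
      intro y
      simpa [phiApp] using hx y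
    have := hbij.injective (a₁ := x) (a₂ := 0) (by simpa using h0)
    exact this
  -- trace of 1
  have tr1 : tr (1 : ZigAlg k V G) = 0 := by
    rw [← zig_oneEq (k := k) (V := V) (G := G)]
    simp [htre]
  -- homogeneity
  have hgen : ∀ (Lx Ly : List (ZigGen V G)),
      (Lx.map (zigDeg V G)).sum + (Ly.map (zigDeg V G)).sum ≠ 2 →
      tr ((Lx.map fun g => RingQuot.mkAlgHom k (ZigRel k V G) (FreeAlgebra.ι k g)).prod
        * (Ly.map fun g => RingQuot.mkAlgHom k (ZigRel k V G) (FreeAlgebra.ι k g)).prod) = 0 := by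
    intro Lx Ly hms
    rw [← List.prod_append, ← List.map_append]
    by_cases hL : Lx ++ Ly = []
    · rw [hL]
      simpa using tr1
    · rcases zig_prodReduce (k := k) (Lx ++ Ly) hL with h0 | ⟨g, hdg, hpg⟩
      · rw [h0, map_zero]
      · rw [hpg]
        rw [List.map_append, List.sum_append] at hdg
        rcases g with i | ⟨p, h⟩ | i
        · exact htre i
        · exact htra p h
        · exact absurd (hdg ▸ hms) (by simp [zigDeg])
  have hom : ∀ (m s : ℕ), m + s ≠ 2 → ∀ x ∈ ZigComp k V G m, ∀ y ∈ ZigComp k V G s,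
      tr (x * y) = 0 := by
    intro m s hms x hx
    induction hx using Submodule.span_induction with
    | mem x hxm =>
      intro y hy
      induction hy using Submodule.span_induction with
      | mem y hym =>
        obtain ⟨Lx, hLx, rfl⟩ := hxm
        obtain ⟨Ly, hLy, rfl⟩ := hym
        exact hgen Lx Ly (by rw [hLx, hLy]; exact hms)
      | zero => simp
      | add y z hy hz ihy ihz => simp [mul_add, ihy, ihz]
      | smul a y hy ihy => simp [mul_smul_comm, ihy]
    | zero => intro y hy; simp
    | add x z hx hz ihx ihz => intro y hy; simp [add_mul, ihx y hy, ihz y hy]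
    | smul a x hx ihx => intro y hy; simp [smul_mul_assoc, ihx y hy]
  refine ⟨hsymm, ⟨hnd, hsymm, fun x y z => by rw [mul_assoc]⟩,
    hbij, ?_, ?_, ?_, ?_, ?_⟩
  · intro a x b y
    rw [phiApp, phiApp]
    simp only [mul_assoc]
    rw [hsymm a (x * (b * y))]
    simp only [mul_assoc]
  · intro m s x y hx hy hms
    rw [phiApp]
    exact hom m s hms x hx y hy
  · intro i
    have := phiB (Sum.inl i)
    rw [hB] at this
    simpa [zigFam, zigSigma] using this
  · intro p h
    have := phiB (Sum.inr (Sum.inl ⟨p, h⟩))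
    rw [hB] at this
    simp [zigFam, zigSigma] at this; exact this
  · intro i
    have := phiB (Sum.inr (Sum.inr i))
    rw [hB] at this
    simpa [zigFam, zigSigma] using this
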